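/- Let t > 0, let μ be a probability measure on ℝ, and let z ∈ ℂ with Im z > 2√t. Then the map Φ(w) = z + t·G_μ(w) maps the half-plane {w ∈ ℂ : Im w > Im(z)/2} into itself, and on this half-plane it is a strict contraction: |Φ(w) − Φ(w')| ≤ (4t/Im(z)²)·|w − w'| for all w, w' with Im w > Im(z)/2 and Im w' > Im(z)/2, where 4t/Im(z)² < 1. -/

import Mathlib

open MeasureTheory

/-- The Cauchy transform of a measure `μ` on `ℝ`: `G_μ(z) = ∫ (z - x)⁻¹ dμ(x)`. -/
noncomputable def cauchyTransform (μ : Measure ℝ) (z : ℂ) : ℂ :=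
  ∫ x, (z - (x : ℂ))⁻¹ ∂μ

lemma aux_ne (w : ℂ) (hw : 0 < w.im) (x : ℝ) : w - (x : ℂ) ≠ 0 := by
  intro h
  have := congrArg Complex.im h
  simp only [Complex.sub_im, Complex.ofReal_im, sub_zero, Complex.zero_im] at this
  exact hw.ne' this

lemma aux_abs_inv_le (w : ℂ) (hw : 0 < w.im) (x : ℝ) :
    ‖(w - (x : ℂ))⁻¹‖ ≤ (w.im)⁻¹ := by
  rw [norm_inv]
  have h1 : w.im ≤ ‖w - (x : ℂ)‖ := by
    have := Complex.abs_im_le_norm (w - (x : ℂ))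
    simp only [Complex.sub_im, Complex.ofReal_im, sub_zero] at this
    exact (le_abs_self _).trans this
  exact inv_anti₀ hw h1

lemma aux_integrable (μ : Measure ℝ) [IsFiniteMeasure μ] (w : ℂ) (hw : 0 < w.im) :
    Integrable (fun x : ℝ => (w - (x : ℂ))⁻¹) μ := by
  apply Integrable.mono' (integrable_const (w.im)⁻¹)
  · exact Continuous.aestronglyMeasurable
      (((continuous_const.sub Complex.continuous_ofReal).inv₀ fun x => aux_ne w hw x))
  · filter_upwards with x
    exact aux_abs_inv_le w hw x

lemma aux_abs_cauchy_le (μ : Measure ℝ) [IsProbabilityMeasure μ] (w : ℂ) (hw : 0 < w.im) :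
    ‖cauchyTransform μ w‖ ≤ (w.im)⁻¹ := by
  have := norm_integral_le_of_norm_le_const (μ := μ) (C := (w.im)⁻¹)
    (f := fun x : ℝ => (w - (x : ℂ))⁻¹) (Filter.Eventually.of_forall fun x => aux_abs_inv_le w hw x)
  simpa [cauchyTransform] using this

/-- For `t > 0`, a probability measure `μ` and `Im z > 2√t`, the map `Φ(w) = z + t G_μ(w)`
maps `{Im w > Im z / 2}` into itself and is a strict contraction there, with constant
`4t/Im(z)² < 1`. -/
theorem contraction_map (t : ℝ) (ht : 0 < t) (μ : Measure ℝ) [IsProbabilityMeasure μ]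
    (z : ℂ) (hz : 2 * Real.sqrt t < z.im) :
    (∀ w : ℂ, z.im / 2 < w.im → z.im / 2 < (z + (t : ℂ) * cauchyTransform μ w).im) ∧
    (∀ w w' : ℂ, z.im / 2 < w.im → z.im / 2 < w'.im →
      ‖(z + (t : ℂ) * cauchyTransform μ w) - (z + (t : ℂ) * cauchyTransform μ w')‖ ≤
        (4 * t / z.im ^ 2) * ‖w - w'‖) ∧
    4 * t / z.im ^ 2 < 1 := by
  have hst : 0 < Real.sqrt t := Real.sqrt_pos.mpr ht
  have hv : 0 < z.im := lt_trans (by positivity) hz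
  have h4t : 4 * t < z.im ^ 2 := by
    nlinarith [Real.sq_sqrt ht.le, hst]
  refine ⟨?_, ?_, ?_⟩
  · intro w hw
    have hwpos : 0 < w.im := lt_trans (by positivity) hw
    have hG : ‖cauchyTransform μ w‖ ≤ (w.im)⁻¹ := aux_abs_cauchy_le μ w hwpos
    have hGim : |(cauchyTransform μ w).im| ≤ (w.im)⁻¹ :=
      le_trans (Complex.abs_im_le_norm _) hG
    have him : (z + (t : ℂ) * cauchyTransform μ w).im = z.im + t * (cauchyTransform μ w).im := by
      simp [Complex.add_im, Complex.mul_im]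
    rw [him]
    have hinv : (w.im)⁻¹ ≤ 2 / z.im := by
      have := inv_anti₀ (by positivity : (0:ℝ) < z.im / 2) hw.le
      rwa [inv_div] at this
    have h5 : -(2 / z.im) ≤ (cauchyTransform μ w).im := by
      have := neg_abs_le (cauchyTransform μ w).im
      linarith [hGim.trans hinv]
    have h6 : -(t * (2 / z.im)) ≤ t * (cauchyTransform μ w).im := by nlinarith
    have h7 : t * (2 / z.im) < z.im / 2 := by
      rw [mul_div_assoc', div_lt_div_iff₀ hv (by norm_num : (0:ℝ) < 2)]
      nlinarith
    linarith
  · intro w w' hw hw'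
    have hwpos : 0 < w.im := lt_trans (by positivity) hw
    have hw'pos : 0 < w'.im := lt_trans (by positivity) hw'
    have hsub : cauchyTransform μ w - cauchyTransform μ w'
        = ∫ x, ((w - (x : ℂ))⁻¹ - (w' - (x : ℂ))⁻¹) ∂μ := by
      rw [cauchyTransform, cauchyTransform,
        integral_sub (aux_integrable μ w hwpos) (aux_integrable μ w' hw'pos)]
    have hbound : ∀ x : ℝ, ‖(w - (x : ℂ))⁻¹ - (w' - (x : ℂ))⁻¹‖
        ≤ ‖w - w'‖ * ((w.im)⁻¹ * (w'.im)⁻¹) := by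
      intro x
      have hid : (w - (x : ℂ))⁻¹ - (w' - (x : ℂ))⁻¹
          = (w' - w) * ((w - (x : ℂ))⁻¹ * (w' - (x : ℂ))⁻¹) := by
        field_simp [aux_ne w hwpos x, aux_ne w' hw'pos x]
        ring
      rw [hid, norm_mul, norm_mul, norm_sub_rev w' w]
      exact mul_le_mul_of_nonneg_left
        (mul_le_mul (aux_abs_inv_le w hwpos x) (aux_abs_inv_le w' hw'pos x)
          (norm_nonneg _) (by positivity))
        (norm_nonneg _)
    have hnorm : ‖cauchyTransform μ w - cauchyTransform μ w'‖
        ≤ ‖w - w'‖ * ((w.im)⁻¹ * (w'.im)⁻¹) := by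
      rw [hsub]
      have := norm_integral_le_of_norm_le_const (μ := μ)
        (C := ‖w - w'‖ * ((w.im)⁻¹ * (w'.im)⁻¹))
        (f := fun x : ℝ => (w - (x : ℂ))⁻¹ - (w' - (x : ℂ))⁻¹)
        (Filter.Eventually.of_forall hbound)
      simpa using this
    have hmain : (z + (t : ℂ) * cauchyTransform μ w) - (z + (t : ℂ) * cauchyTransform μ w')
        = (t : ℂ) * (cauchyTransform μ w - cauchyTransform μ w') := by ring
    rw [hmain, norm_mul, Complex.norm_real, Real.norm_eq_abs, abs_of_pos ht]
    have hiw : (w.im)⁻¹ ≤ 2 / z.im := by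
      have := inv_anti₀ (by positivity : (0:ℝ) < z.im / 2) hw.le
      rwa [inv_div] at this
    have hiw' : (w'.im)⁻¹ ≤ 2 / z.im := by
      have := inv_anti₀ (by positivity : (0:ℝ) < z.im / 2) hw'.le
      rwa [inv_div] at this
    have hstep : (w.im)⁻¹ * (w'.im)⁻¹ ≤ (2 / z.im) * (2 / z.im) :=
      mul_le_mul hiw hiw' (by positivity) (by positivity)
    have hstep2 : ‖w - w'‖ * ((w.im)⁻¹ * (w'.im)⁻¹)
        ≤ ‖w - w'‖ * ((2 / z.im) * (2 / z.im)) :=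
      mul_le_mul_of_nonneg_left hstep (norm_nonneg _)
    calc t * ‖cauchyTransform μ w - cauchyTransform μ w'‖
        ≤ t * (‖w - w'‖ * ((2 / z.im) * (2 / z.im))) :=
          mul_le_mul_of_nonneg_left (hnorm.trans hstep2) ht.le
      _ = (4 * t / z.im ^ 2) * ‖w - w'‖ := by
          field_simp
          ring
  · rw [div_lt_one (by positivity)]; linarith
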